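/- arXiv:2108.03513 — 3 statements merged into one kernel-verified Lean document; each statement's English description precedes it below -/
import Mathlib

section
/- Let p ≥ 2 and ν₀, ν₁ > 0. For all symmetric real 3×3 matrices A and B, the Ladyzhenskaya stress map T(A) = 2(ν₀ + ν₁ |A|_F^{p-2}) A satisfies the monotonicity inequality (T(A) − T(B)) : (A − B) ≥ 2 ν₀ |A − B|_F². -/
/-- Frobenius inner product of two real 3×3 matrices: `A : B = ∑ᵢⱼ Aᵢⱼ Bᵢⱼ`. -/
noncomputable def frobInner (A B : Matrix (Fin 3) (Fin 3) ℝ) : ℝ :=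
  ∑ i : Fin 3, ∑ j : Fin 3, A i j * B i j

/-- Frobenius norm `|A|_F = (A : A)^{1/2}`. -/
noncomputable def frobNorm (A : Matrix (Fin 3) (Fin 3) ℝ) : ℝ :=
  Real.sqrt (frobInner A A)

/-- The Ladyzhenskaya stress map `T(A) = 2 (ν₀ + ν₁ |A|_F^{p-2}) A`. -/
noncomputable def ladyT (p ν₀ ν₁ : ℝ) (A : Matrix (Fin 3) (Fin 3) ℝ) :
    Matrix (Fin 3) (Fin 3) ℝ :=
  (2 * (ν₀ + ν₁ * frobNorm A ^ (p - 2))) • A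

lemma frobInner_self_nonneg (A : Matrix (Fin 3) (Fin 3) ℝ) : 0 ≤ frobInner A A := by
  apply Finset.sum_nonneg; intro i _
  exact Finset.sum_nonneg fun j _ => mul_self_nonneg _

lemma frobNorm_nonneg (A : Matrix (Fin 3) (Fin 3) ℝ) : 0 ≤ frobNorm A := Real.sqrt_nonneg _

lemma sq_frobNorm (A : Matrix (Fin 3) (Fin 3) ℝ) : frobNorm A ^ 2 = frobInner A A :=
  Real.sq_sqrt (frobInner_self_nonneg A)

lemma frobInner_comm (A B : Matrix (Fin 3) (Fin 3) ℝ) : frobInner A B = frobInner B A := by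
  simp [frobInner, mul_comm]

lemma frobInner_sub_left (A B C : Matrix (Fin 3) (Fin 3) ℝ) :
    frobInner (A - B) C = frobInner A C - frobInner B C := by
  simp [frobInner, Matrix.sub_apply, sub_mul, Finset.sum_sub_distrib]

lemma frobInner_sub_right (A B C : Matrix (Fin 3) (Fin 3) ℝ) :
    frobInner A (B - C) = frobInner A B - frobInner A C := by
  simp [frobInner, Matrix.sub_apply, mul_sub, Finset.sum_sub_distrib]

lemma frobInner_smul_left (c : ℝ) (A B : Matrix (Fin 3) (Fin 3) ℝ) :
    frobInner (c • A) B = c * frobInner A B := by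
  simp [frobInner, Matrix.smul_apply, Finset.mul_sum, mul_assoc]

/-- Cauchy–Schwarz for the Frobenius inner product. -/
lemma frobInner_le (A B : Matrix (Fin 3) (Fin 3) ℝ) :
    frobInner A B ≤ frobNorm A * frobNorm B := by
  have key : frobInner A B ^ 2 ≤ frobInner A A * frobInner B B := by
    have h := Finset.sum_mul_sq_le_sq_mul_sq Finset.univ
      (fun p : Fin 3 × Fin 3 => A p.1 p.2) (fun p : Fin 3 × Fin 3 => B p.1 p.2)
    simpa [frobInner, Fintype.sum_prod_type, sq, Finset.sum_mul_sum] using h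
  calc frobInner A B ≤ |frobInner A B| := le_abs_self _
    _ = Real.sqrt (frobInner A B ^ 2) := (Real.sqrt_sq_eq_abs _).symm
    _ ≤ Real.sqrt (frobInner A A * frobInner B B) := Real.sqrt_le_sqrt key
    _ = frobNorm A * frobNorm B := Real.sqrt_mul (frobInner_self_nonneg A) _

lemma rpow_mono_aux (a b q : ℝ) (ha : 0 ≤ a) (hb : 0 ≤ b) (hq : 0 ≤ q) :
    0 ≤ (a - b) * (a ^ q * a - b ^ q * b) := by
  rcases le_total a b with h | h
  · have h1 : a ^ q * a ≤ b ^ q * b :=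
      mul_le_mul (Real.rpow_le_rpow ha h hq) h ha (Real.rpow_nonneg hb q)
    nlinarith
  · have h1 : b ^ q * b ≤ a ^ q * a :=
      mul_le_mul (Real.rpow_le_rpow hb h hq) h hb (Real.rpow_nonneg ha q)
    exact mul_nonneg (by linarith) (by linarith)

/-- Monotonicity of the Ladyzhenskaya stress:
`(T(A) − T(B)) : (A − B) ≥ 2 ν₀ |A − B|_F²` for symmetric `A`, `B`. -/
theorem ladyT_monotone (p ν₀ ν₁ : ℝ) (hp : 2 ≤ p) (hν₀ : 0 < ν₀) (hν₁ : 0 < ν₁)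
    (A B : Matrix (Fin 3) (Fin 3) ℝ) (hA : A.IsSymm) (hB : B.IsSymm) :
    2 * ν₀ * frobNorm (A - B) ^ 2 ≤
      frobInner (ladyT p ν₀ ν₁ A - ladyT p ν₀ ν₁ B) (A - B) := by
  set a := frobNorm A with ha_def
  set b := frobNorm B with hb_def
  set q := p - 2 with hq_def
  have hq : 0 ≤ q := by linarith
  have ha : 0 ≤ a := frobNorm_nonneg A
  have hb : 0 ≤ b := frobNorm_nonneg B
  have haq : (0:ℝ) ≤ a ^ q := Real.rpow_nonneg ha q
  have hbq : (0:ℝ) ≤ b ^ q := Real.rpow_nonneg hb q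
  have hα : frobInner A A = a ^ 2 := (sq_frobNorm A).symm
  have hβ : frobInner B B = b ^ 2 := (sq_frobNorm B).symm
  have hγ : frobInner A B ≤ a * b := frobInner_le A B
  have hmono := rpow_mono_aux a b q ha hb hq
  have hLHS : frobNorm (A - B) ^ 2 = a ^ 2 - 2 * frobInner A B + b ^ 2 := by
    rw [sq_frobNorm, frobInner_sub_left, frobInner_sub_right, frobInner_sub_right,
      frobInner_comm B A, hα, hβ]
    ring
  have hRHS : frobInner (ladyT p ν₀ ν₁ A - ladyT p ν₀ ν₁ B) (A - B) =
      2 * (ν₀ + ν₁ * a ^ q) * (a ^ 2 - frobInner A B)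
        - 2 * (ν₀ + ν₁ * b ^ q) * (frobInner A B - b ^ 2) := by
    rw [ladyT, ladyT, frobInner_sub_left, frobInner_smul_left, frobInner_smul_left,
      frobInner_sub_right, frobInner_sub_right, frobInner_comm B A, hα, hβ]
  rw [hLHS, hRHS]
  nlinarith [mul_nonneg (le_of_lt hν₁) hmono,
    mul_nonneg (mul_nonneg (le_of_lt hν₁) (add_nonneg haq hbq)) (sub_nonneg.2 hγ)]
end

section
/- Uniform Gronwall lemma: let t₀ ∈ ℝ and r, a₁, a₂, a₃ > 0. Let f be locally absolutely continuous on [t₀, ∞) with locally integrable derivative f′, and let λ, g be nonnegative locally integrable functions on [t₀, ∞) such that f′(t) ≤ λ(t) f(t) + g(t) for almost every t ≥ t₀, and for every t ≥ t₀: ∫_t^{t+r} λ(τ) dτ ≤ a₁, ∫_t^{t+r} g(τ) dτ ≤ a₂, and ∫_t^{t+r} f(τ) dτ ≤ a₃. Then f(t) ≤ (a₃/r + a₂) e^{a₁} for all t ≥ t₀ + r. -/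
open MeasureTheory

/-- **Uniform Gronwall lemma.** Let `t₀ ∈ ℝ` and `r, a₁, a₂, a₃ > 0`. Let `f` be locally
absolutely continuous on `[t₀, ∞)` (encoded via the fundamental theorem of calculus:
`f t = f t₀ + ∫_{t₀}^t f'` with `f'` locally integrable), and let `λ, g` be nonnegative
locally integrable functions on `[t₀, ∞)` such that `f'(t) ≤ λ(t) f(t) + g(t)` for a.e.
`t ≥ t₀`, and for every `t ≥ t₀`:
`∫_t^{t+r} λ ≤ a₁`, `∫_t^{t+r} g ≤ a₂`, `∫_t^{t+r} f ≤ a₃`.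
Then `f(t) ≤ (a₃/r + a₂) e^{a₁}` for all `t ≥ t₀ + r`. -/
theorem uniform_gronwall (t₀ r a₁ a₂ a₃ : ℝ)
    (hr : 0 < r) (ha₁ : 0 < a₁) (ha₂ : 0 < a₂) (ha₃ : 0 < a₃)
    (f f' lam g : ℝ → ℝ)
    (hf'int : ∀ b, IntegrableOn f' (Set.Icc t₀ b))
    (hfAC : ∀ t, t₀ ≤ t → f t = f t₀ + ∫ s in t₀..t, f' s)
    (hlamint : ∀ b, IntegrableOn lam (Set.Icc t₀ b))
    (hgint : ∀ b, IntegrableOn g (Set.Icc t₀ b))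
    (hfint : ∀ b, IntegrableOn f (Set.Icc t₀ b))
    (hlam_nn : ∀ t, t₀ ≤ t → 0 ≤ lam t)
    (hg_nn : ∀ t, t₀ ≤ t → 0 ≤ g t)
    (hineq : ∀ᵐ t ∂(volume : Measure ℝ), t₀ ≤ t → f' t ≤ lam t * f t + g t)
    (hlam : ∀ t, t₀ ≤ t → (∫ τ in t..(t + r), lam τ) ≤ a₁)
    (hg : ∀ t, t₀ ≤ t → (∫ τ in t..(t + r), g τ) ≤ a₂)
    (hf : ∀ t, t₀ ≤ t → (∫ τ in t..(t + r), f τ) ≤ a₃) :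
    ∀ t, t₀ + r ≤ t → f t ≤ (a₃ / r + a₂) * Real.exp a₁ := by
  -- interval integrability helper
  have hII : ∀ (h : ℝ → ℝ), (∀ b, IntegrableOn h (Set.Icc t₀ b)) →
      ∀ u v : ℝ, t₀ ≤ u → u ≤ v → IntervalIntegrable h volume u v := by
    intro h hh u v hu huv
    rw [intervalIntegrable_iff_integrableOn_Icc_of_le huv]
    exact (hh v).mono_set (Set.Icc_subset_Icc hu le_rfl)
  -- continuity of f on compacts
  have hcont : ∀ b, ContinuousOn f (Set.Icc t₀ b) := by
    intro b
    have h1 : ContinuousOn (fun x => f t₀ + ∫ s in Set.Ioc t₀ x, f' s) (Set.Icc t₀ b) :=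
      continuousOn_const.add (intervalIntegral.continuousOn_primitive (hf'int b))
    refine ContinuousOn.congr h1 ?_
    intro x hx
    rw [hfAC x hx.1, intervalIntegral.integral_of_le hx.1]
  -- FTC difference
  have hdiff : ∀ u w : ℝ, t₀ ≤ u → u ≤ w → f w - f u = ∫ s in u..w, f' s := by
    intro u w hu huw
    rw [hfAC u hu, hfAC w (hu.trans huw)]
    have h := intervalIntegral.integral_interval_sub_left
      (hII f' hf'int t₀ w le_rfl (hu.trans huw)) (hII f' hf'int t₀ u le_rfl hu)
    linarith [h]
  -- integrability of lam * f
  have hlfint : ∀ u v : ℝ, t₀ ≤ u → u ≤ v →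
      IntervalIntegrable (fun τ => lam τ * f τ) volume u v := by
    intro u v hu huv
    rw [intervalIntegrable_iff_integrableOn_Icc_of_le huv]
    obtain ⟨C, hC⟩ := isCompact_Icc.exists_bound_of_continuousOn
      ((hcont v).mono (Set.Icc_subset_Icc hu le_rfl))
    have hlam' : IntegrableOn lam (Set.Icc u v) :=
      (hlamint v).mono_set (Set.Icc_subset_Icc hu le_rfl)
    have hfm : AEStronglyMeasurable f (volume.restrict (Set.Icc u v)) :=
      ((hfint v).mono_set (Set.Icc_subset_Icc hu le_rfl)).aestronglyMeasurable
    have hb : ∀ᵐ x ∂(volume.restrict (Set.Icc u v)), ‖f x‖ ≤ C := by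
      filter_upwards [ae_restrict_mem measurableSet_Icc] with x hx
      exact hC x hx
    exact (hlam'.bdd_mul hfm hb).congr
      (Filter.Eventually.of_forall fun x => mul_comm (f x) (lam x))
  -- nonnegativity of g-integrals
  have hGnn : ∀ a b : ℝ, t₀ ≤ a → a ≤ b → 0 ≤ ∫ τ in a..b, g τ := fun a b ha hab =>
    intervalIntegral.integral_nonneg hab fun τ hτ => hg_nn τ (ha.trans hτ.1)
  -- the one-step estimate
  have step : ∀ c : ℝ, 0 ≤ c → c < 1 → ∀ s u : ℝ, t₀ ≤ s → s ≤ u →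
      (∫ τ in s..u, lam τ) ≤ c →
      f u ≤ (max (f s) 0 + ∫ τ in s..u, g τ) / (1 - c) := by
    intro c hc0 hc1 s u hs hsu hΛ
    have hG : 0 ≤ ∫ τ in s..u, g τ := hGnn s u hs hsu
    obtain ⟨x, hxmem, hxmax⟩ := isCompact_Icc.exists_isMaxOn (Set.nonempty_Icc.2 hsu)
      ((hcont u).mono (Set.Icc_subset_Icc hs le_rfl))
    set M := f x with hM
    set Mp := max M 0 with hMp
    have hMpnn : (0:ℝ) ≤ Mp := le_max_right _ _
    have hkey : ∀ w ∈ Set.Icc s u, f w ≤ f s + (c * Mp + ∫ τ in s..u, g τ) := by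
      intro w hw
      have hsw : s ≤ w := hw.1
      have hwu : w ≤ u := hw.2
      have htw : t₀ ≤ w := hs.trans hsw
      have i1 : IntervalIntegrable f' volume s w := hII f' hf'int s w hs hsw
      have i2 : IntervalIntegrable (fun τ => lam τ * f τ) volume s w := hlfint s w hs hsw
      have i3 : IntervalIntegrable g volume s w := hII g hgint s w hs hsw
      have i4 : IntervalIntegrable lam volume s w := hII lam hlamint s w hs hsw
      have h1 : (∫ τ in s..w, f' τ) ≤ ∫ τ in s..w, (lam τ * f τ + g τ) := by
        refine intervalIntegral.integral_mono_ae_restrict hsw i1 (i2.add i3) ?_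
        filter_upwards [ae_restrict_of_ae hineq, ae_restrict_mem measurableSet_Icc] with τ hτ1 hτ2
        exact hτ1 (hs.trans hτ2.1)
      rw [intervalIntegral.integral_add i2 i3] at h1
      have h2 : (∫ τ in s..w, lam τ * f τ) ≤ ∫ τ in s..w, lam τ * Mp := by
        refine intervalIntegral.integral_mono_on hsw i2 (i4.mul_const Mp) ?_
        intro τ hτ
        have hfτ : f τ ≤ Mp := le_trans (hxmax ⟨hτ.1, hτ.2.trans hwu⟩) (le_max_left _ _)
        exact mul_le_mul_of_nonneg_left hfτ (hlam_nn τ (hs.trans hτ.1))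
      have h3 : (∫ τ in s..w, lam τ) ≤ c := by
        have hadd := intervalIntegral.integral_add_adjacent_intervals i4
          (hII lam hlamint w u htw hwu)
        have hnn : 0 ≤ ∫ τ in w..u, lam τ :=
          intervalIntegral.integral_nonneg hwu fun τ hτ => hlam_nn τ (htw.trans hτ.1)
        linarith
      have h4 : (∫ τ in s..w, g τ) ≤ ∫ τ in s..u, g τ := by
        have hadd := intervalIntegral.integral_add_adjacent_intervals i3
          (hII g hgint w u htw hwu)
        have hnn : 0 ≤ ∫ τ in w..u, g τ := hGnn w u htw hwu
        linarith
      have h5 := hdiff s w hs hsw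
      have h6 : (∫ τ in s..w, lam τ * Mp) = (∫ τ in s..w, lam τ) * Mp :=
        intervalIntegral.integral_mul_const Mp lam
      have h7 : (∫ τ in s..w, lam τ) * Mp ≤ c * Mp := mul_le_mul_of_nonneg_right h3 hMpnn
      linarith [h1, h2, h4, h5, h6, h7]
    have hMle : M ≤ f s + (c * Mp + ∫ τ in s..u, g τ) := hkey x hxmem
    have hMple : Mp ≤ max (f s) 0 + (c * Mp + ∫ τ in s..u, g τ) := by
      refine max_le ?_ ?_
      · exact hMle.trans (add_le_add_left (le_max_left _ _) _)
      · have : (0:ℝ) ≤ c * Mp := mul_nonneg hc0 hMpnn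
        have : (0:ℝ) ≤ max (f s) 0 := le_max_right _ _
        positivity
    have hfinal : Mp ≤ (max (f s) 0 + ∫ τ in s..u, g τ) / (1 - c) := by
      rw [le_div_iff₀ (by linarith : (0:ℝ) < 1 - c)]
      nlinarith [hMple]
    have hfu : f u ≤ M := hxmax ⟨hsu, le_rfl⟩
    exact le_trans (hfu.trans (le_max_left M 0)) hfinal
  -- the iterated estimate
  have key : ∀ c : ℝ, 0 < c → c < 1 → ∀ n : ℕ, ∀ s u : ℝ, t₀ ≤ s → s ≤ u →
      (∫ τ in s..u, lam τ) ≤ n * c →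
      f u ≤ (max (f s) 0 + ∫ τ in s..u, g τ) / (1 - c) ^ n := by
    intro c hc0 hc1 n
    induction n with
    | zero =>
      intro s u hs hsu hΛ
      simpa using step 0 le_rfl one_pos s u hs hsu (by simpa using hΛ)
    | succ n ih =>
      intro s u hs hsu hΛ
      have hnum_nn : 0 ≤ max (f s) 0 + ∫ τ in s..u, g τ :=
        add_nonneg (le_max_right _ _) (hGnn s u hs hsu)
      have hpow : (0:ℝ) < (1 - c) ^ n := pow_pos (by linarith) n
      have hpow1 : (0:ℝ) < (1 - c) ^ (n + 1) := pow_pos (by linarith) _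
      by_cases hcase : (∫ τ in s..u, lam τ) ≤ n * c
      · refine (ih s u hs hsu hcase).trans ?_
        rw [div_le_div_iff₀ hpow hpow1]
        have hpp : (1 - c) ^ (n + 1) ≤ (1 - c) ^ n :=
          pow_le_pow_of_le_one (by linarith) (by linarith) (Nat.le_succ n)
        exact mul_le_mul_of_nonneg_left hpp hnum_nn
      · push_neg at hcase
        have hΛint : IntegrableOn lam (Set.uIcc s u) := by
          rw [Set.uIcc_of_le hsu]
          exact (hlamint u).mono_set (Set.Icc_subset_Icc hs le_rfl)
        have hΛcont : ContinuousOn (fun x => ∫ τ in s..x, lam τ) (Set.Icc s u) := by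
          have h := intervalIntegral.continuousOn_primitive_interval hΛint
          rwa [Set.uIcc_of_le hsu] at h
        have hmem : (n : ℝ) * c ∈
            Set.Icc ((fun x => ∫ τ in s..x, lam τ) s) ((fun x => ∫ τ in s..x, lam τ) u) := by
          constructor
          · simp only [intervalIntegral.integral_same]
            positivity
          · simpa using hcase.le
        obtain ⟨m, hm, hΛm⟩ := intermediate_value_Icc hsu hΛcont hmem
        simp only at hΛm
        have hsm : s ≤ m := hm.1
        have hmu : m ≤ u := hm.2
        have htm : t₀ ≤ m := hs.trans hsm
        have isub := intervalIntegral.integral_interval_sub_left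
          (hII lam hlamint s u hs hsu) (hII lam hlamint s m hs hsm)
        have h2 : (∫ τ in m..u, lam τ) ≤ c := by
          push_cast at hΛ
          linarith
        have hfm := ih s m hs hsm (le_of_eq hΛm)
        have hfu := step c hc0.le hc1 m u htm hmu h2
        have hGadd := intervalIntegral.integral_add_adjacent_intervals
          (hII g hgint s m hs hsm) (hII g hgint m u htm hmu)
        have hG₁ : 0 ≤ ∫ τ in s..m, g τ := hGnn s m hs hsm
        have hG₂ : 0 ≤ ∫ τ in m..u, g τ := hGnn m u htm hmu
        set G₂ := ∫ τ in m..u, g τ with hG₂def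
        set A := max (f s) 0 + ∫ τ in s..m, g τ with hA
        have hAnn : 0 ≤ A := add_nonneg (le_max_right _ _) hG₁
        have hfmp : max (f m) 0 ≤ A / (1 - c) ^ n := max_le hfm (by positivity)
        have hstep2 : f u ≤ (A / (1 - c) ^ n + G₂) / (1 - c) := by
          refine hfu.trans ?_
          have hnum : max (f m) 0 + G₂ ≤ A / (1 - c) ^ n + G₂ := add_le_add_left hfmp _
          exact (div_le_div_iff_of_pos_right (by linarith)).2 hnum
        have hG2le : G₂ ≤ G₂ / (1 - c) ^ n := by
          rw [le_div_iff₀ hpow]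
          have hp1 : (1 - c) ^ n ≤ 1 := pow_le_one₀ (by linarith) (by linarith)
          nlinarith
        calc f u ≤ (A / (1 - c) ^ n + G₂) / (1 - c) := hstep2
          _ ≤ ((A + G₂) / (1 - c) ^ n) / (1 - c) := by
              have hle : A / (1 - c) ^ n + G₂ ≤ (A + G₂) / (1 - c) ^ n := by
                have hadd : (A + G₂) / (1 - c) ^ n = A / (1 - c) ^ n + G₂ / (1 - c) ^ n :=
                  add_div A G₂ _
                rw [hadd]
                linarith
              exact (div_le_div_iff_of_pos_right (by linarith)).2 hle
          _ = (A + G₂) / (1 - c) ^ (n + 1) := by rw [div_div, ← pow_succ]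
          _ = (max (f s) 0 + ∫ τ in s..u, g τ) / (1 - c) ^ (n + 1) := by
              rw [hA, hG₂def, ← hGadd, hG₂def]
              ring_nf
  -- main argument
  intro t ht
  have htr : t₀ ≤ t - r := by linarith
  have htt : t₀ ≤ t := by linarith
  obtain ⟨s, hsmem, hfs⟩ : ∃ s ∈ Set.Icc (t - r) t, f s ≤ a₃ / r := by
    by_contra hcon
    push_neg at hcon
    obtain ⟨x, hxmem, hxmin⟩ := isCompact_Icc.exists_isMinOn
      (Set.nonempty_Icc.2 (by linarith)) ((hcont t).mono (Set.Icc_subset_Icc htr le_rfl))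
    have h1 : a₃ / r < f x := hcon x hxmem
    have hconst : (∫ _ in (t - r)..t, f x) = f x * r := by
      rw [intervalIntegral.integral_const, smul_eq_mul]
      ring
    have h2 : f x * r ≤ ∫ τ in (t - r)..t, f τ := by
      have h := intervalIntegral.integral_mono_on (by linarith : t - r ≤ t)
        intervalIntegrable_const (hII f hfint (t - r) t htr (by linarith))
        (fun τ hτ => hxmin hτ)
      rw [hconst] at h
      exact h
    have h3 := hf (t - r) htr
    have h4 : t - r + r = t := by ring
    rw [h4] at h3
    rw [div_lt_iff₀ hr] at h1
    linarith
  have hst : s ≤ t := hsmem.2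
  have hs0 : t₀ ≤ s := le_trans htr hsmem.1
  have htsr : t ≤ s + r := by linarith [hsmem.1]
  have hGle : (∫ τ in s..t, g τ) ≤ a₂ := by
    have hadd := intervalIntegral.integral_add_adjacent_intervals
      (hII g hgint s t hs0 hst) (hII g hgint t (s + r) htt htsr)
    have hnn : 0 ≤ ∫ τ in t..(s + r), g τ := hGnn t (s + r) htt htsr
    have h := hg s hs0
    linarith
  have hΛle : (∫ τ in s..t, lam τ) ≤ a₁ := by
    have hadd := intervalIntegral.integral_add_adjacent_intervals
      (hII lam hlamint s t hs0 hst) (hII lam hlamint t (s + r) htt htsr)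
    have hnn : 0 ≤ ∫ τ in t..(s + r), lam τ :=
      intervalIntegral.integral_nonneg htsr fun τ hτ => hlam_nn τ (htt.trans hτ.1)
    have h := hlam s hs0
    linarith
  have hmain : ∀ n : ℕ, a₁ < n → f t ≤ (a₃ / r + a₂) / (1 - a₁ / n) ^ n := by
    intro n hn
    have hn0 : (0:ℝ) < n := lt_trans ha₁ hn
    have hc0 : 0 < a₁ / n := div_pos ha₁ hn0
    have hc1 : a₁ / n < 1 := (div_lt_one hn0).2 hn
    have hΛn : (∫ τ in s..t, lam τ) ≤ n * (a₁ / n) := by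
      have he : (n : ℝ) * (a₁ / n) = a₁ := by field_simp
      rw [he]
      exact hΛle
    have hk := key (a₁ / n) hc0 hc1 n s t hs0 hst hΛn
    refine hk.trans ?_
    have hnum : max (f s) 0 + (∫ τ in s..t, g τ) ≤ a₃ / r + a₂ :=
      add_le_add (max_le hfs (by positivity)) hGle
    have hpow : (0:ℝ) < (1 - a₁ / n) ^ n := pow_pos (by linarith) n
    exact (div_le_div_iff_of_pos_right hpow).2 hnum
  have hlim : Filter.Tendsto (fun n : ℕ => (a₃ / r + a₂) / (1 - a₁ / n) ^ n) Filter.atTop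
      (nhds ((a₃ / r + a₂) * Real.exp a₁)) := by
    have h2 : Filter.Tendsto (fun n : ℕ => (1 - a₁ / n) ^ n) Filter.atTop
        (nhds (Real.exp (-a₁))) := by
      have h := Real.tendsto_one_add_div_pow_exp (-a₁)
      simpa [sub_eq_add_neg, neg_div] using h
    have h3 := Filter.Tendsto.div (tendsto_const_nhds (x := a₃ / r + a₂)) h2
      (Real.exp_ne_zero _)
    simpa [Pi.div_def, Real.exp_neg, div_inv_eq_mul] using h3
  refine ge_of_tendsto hlim ?_
  filter_upwards [Filter.eventually_gt_atTop ⌈a₁⌉₊] with n hn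
  refine hmain n (lt_of_le_of_lt (Nat.le_ceil a₁) ?_)
  exact_mod_cast hn
end

section
/- Exponential decay from averaged coercivity: let Y : [0,∞) → [0,∞) be absolutely continuous on compact intervals and let α be locally integrable on [0,∞) with Y′(t) + α(t) Y(t) ≤ 0 for almost every t ≥ 0. Suppose there exist T > 0, β > 0, M ≥ 0 and t* ≥ 0 such that for every t ≥ t*: ∫_t^{t+T} α(s) ds ≥ β and ∫_t^{t+T} max(−α(s), 0) ds ≤ M. Then Y decays exponentially: for all t ≥ t*, Y(t) ≤ Y(t*) e^{β + M} e^{−(β/T)(t − t*)}; in particular Y(t) → 0 exponentially as t → ∞. -/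
open MeasureTheory Set

namespace ExpDecayAux

/-- Fubini swap on the triangle. -/
lemma fubini_swap {a b : ℝ} (hab : a ≤ b) {f g : ℝ → ℝ}
    (hf : IntegrableOn f (Ioc a b)) (hg : IntegrableOn g (Ioc a b)) :
    (∫ u in Ioc a b, g u * ∫ v in Ioc a u, f v)
      = ∫ v in Ioc a b, f v * ∫ u in Ioc v b, g u := by
  set μ := volume.restrict (Ioc a b) with hμ
  have hS : MeasurableSet {p : ℝ × ℝ | p.2 ≤ p.1} :=
    measurableSet_le measurable_snd measurable_fst
  have hH : Integrable (fun p : ℝ × ℝ => ({p : ℝ × ℝ | p.2 ≤ p.1}).indicator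
      (fun q : ℝ × ℝ => g q.1 * f q.2) p) (μ.prod μ) :=
    (hg.mul_prod hf).indicator hS
  have h1 : ∀ u ∈ Ioc a b, (∫ v in Ioc a u, f v) = ∫ v in Ioc a b, (Iic u).indicator f v := by
    intro u hu
    rw [integral_indicator measurableSet_Iic, Measure.restrict_restrict measurableSet_Iic]
    congr 1
    rw [Set.inter_comm, Set.Ioc_inter_Iic, min_eq_right hu.2]
  have h2 : ∀ v ∈ Ioc a b, (∫ u in Ioc v b, g u) = ∫ u in Ioc a b, (Ici v).indicator g u := by
    intro v hv
    rw [integral_indicator measurableSet_Ici, Measure.restrict_restrict measurableSet_Ici]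
    have : Ici v ∩ Ioc a b = Icc v b := by
      ext x; simp only [mem_inter_iff, mem_Ici, mem_Ioc, mem_Icc]
      constructor
      · rintro ⟨h1, _, h3⟩; exact ⟨h1, h3⟩
      · rintro ⟨h1, h2⟩; exact ⟨h1, lt_of_lt_of_le hv.1 h1, h2⟩
    rw [this, integral_Icc_eq_integral_Ioc]
  calc (∫ u in Ioc a b, g u * ∫ v in Ioc a u, f v)
      = ∫ u in Ioc a b, ∫ v in Ioc a b,
          ({p : ℝ × ℝ | p.2 ≤ p.1}).indicator (fun q : ℝ × ℝ => g q.1 * f q.2) (u, v) := by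
        refine setIntegral_congr_fun measurableSet_Ioc (fun u hu => ?_)
        rw [h1 u hu, ← integral_const_mul]
        refine integral_congr_ae (Filter.Eventually.of_forall (fun v => ?_))
        by_cases hvu : v ≤ u <;>
          simp [Set.indicator_apply, hvu]
    _ = ∫ v in Ioc a b, ∫ u in Ioc a b,
          ({p : ℝ × ℝ | p.2 ≤ p.1}).indicator (fun q : ℝ × ℝ => g q.1 * f q.2) (u, v) := by
        exact integral_integral_swap hH
    _ = ∫ v in Ioc a b, f v * ∫ u in Ioc v b, g u := by
        refine setIntegral_congr_fun measurableSet_Ioc (fun v hv => ?_)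
        rw [h2 v hv, ← integral_const_mul]
        refine integral_congr_ae (Filter.Eventually.of_forall (fun u => ?_))
        by_cases hvu : v ≤ u <;>
          simp [Set.indicator_apply, hvu, mul_comm]


section helpers
variable {a b : ℝ} {f : ℝ → ℝ}

/-- A continuous-on-`Icc` multiplier times an integrable function is integrable. -/
lemma mul_cont_integrable (hab : a ≤ b) (hf : IntegrableOn f (Ioc a b))
    {φ : ℝ → ℝ} (hφ : ContinuousOn φ (Icc a b)) :
    IntegrableOn (fun u => f u * φ u) (Ioc a b) := by
  obtain ⟨C, hC⟩ := (isCompact_Icc (a := a) (b := b)).exists_bound_of_continuousOn hφ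
  have hm : AEStronglyMeasurable φ (volume.restrict (Ioc a b)) :=
    (hφ.aestronglyMeasurable measurableSet_Icc).mono_measure
      (Measure.restrict_mono Ioc_subset_Icc_self le_rfl)
  have hbd : ∀ᵐ x ∂(volume.restrict (Ioc a b)), ‖φ x‖ ≤ C := by
    refine (ae_restrict_iff' measurableSet_Ioc).2 (Filter.Eventually.of_forall fun x hx => ?_)
    exact hC x (Ioc_subset_Icc_self hx)
  have := Integrable.bdd_mul (c := C) hf hm hbd
  exact this.congr (Filter.Eventually.of_forall fun x => mul_comm _ _)

lemma prim_continuousOn (hf : IntegrableOn f (Ioc a b)) :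
    ContinuousOn (fun x => ∫ v in Ioc a x, f v) (Icc a b) :=
  intervalIntegral.continuousOn_primitive ((integrableOn_Icc_iff_integrableOn_Ioc (by finiteness)).2 hf)

lemma prim_add (hab : a ≤ b) (hf : IntegrableOn f (Ioc a b)) {x : ℝ} (hx : x ∈ Icc a b) :
    (∫ v in Ioc a b, f v) = (∫ v in Ioc a x, f v) + ∫ v in Ioc x b, f v := by
  rw [← setIntegral_union (Ioc_disjoint_Ioc_of_le le_rfl) measurableSet_Ioc
    (hf.mono_set (Ioc_subset_Ioc_right hx.2)) (hf.mono_set (Ioc_subset_Ioc_left hx.1)),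
    Ioc_union_Ioc_eq_Ioc hx.1 hx.2]

/-- Integration by parts for functions given by integral representations. -/
lemma ibp (hab : a ≤ b) {g F G : ℝ → ℝ}
    (hf : IntegrableOn f (Ioc a b)) (hg : IntegrableOn g (Ioc a b))
    (hF : ∀ x ∈ Icc a b, F x = F a + ∫ v in Ioc a x, f v)
    (hG : ∀ x ∈ Icc a b, G x = G a + ∫ v in Ioc a x, g v) :
    F b * G b = F a * G a + ∫ u in Ioc a b, (f u * G u + F u * g u) := by
  set P : ℝ → ℝ := fun x => ∫ v in Ioc a x, f v with hP
  set Q : ℝ → ℝ := fun x => ∫ v in Ioc a x, g v with hQ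
  have hPc : ContinuousOn P (Icc a b) := prim_continuousOn hf
  have hQc : ContinuousOn Q (Icc a b) := prim_continuousOn hg
  have hfQ : IntegrableOn (fun u => f u * Q u) (Ioc a b) := mul_cont_integrable hab hf hQc
  have hgP : IntegrableOn (fun u => g u * P u) (Ioc a b) := mul_cont_integrable hab hg hPc
  -- the key Fubini identity
  have key : (∫ u in Ioc a b, g u * P u) = (∫ v in Ioc a b, f v * (Q b - Q v)) := by
    rw [fubini_swap hab hf hg]
    refine setIntegral_congr_fun measurableSet_Ioc (fun v hv => ?_)
    have := prim_add hab hg (Ioc_subset_Icc_self hv)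
    have h2 : (∫ u in Ioc v b, g u) = Q b - Q v := by rw [hQ]; simp only; linarith [this]
    rw [h2]
  have hfQb : IntegrableOn (fun u => f u * (Q b - Q u)) (Ioc a b) :=
    mul_cont_integrable hab hf (continuousOn_const.sub hQc)
  have e1 : (∫ u in Ioc a b, (f u * G u + F u * g u))
      = ∫ u in Ioc a b, (f u * (G a + Q u) + (F a + P u) * g u) := by
    refine setIntegral_congr_fun measurableSet_Ioc (fun u hu => ?_)
    rw [hF u (Ioc_subset_Icc_self hu), hG u (Ioc_subset_Icc_self hu)]
  have i1 : IntegrableOn (fun u => f u * (G a + Q u)) (Ioc a b) :=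
    mul_cont_integrable hab hf (continuousOn_const.add hQc)
  have i2 : IntegrableOn (fun u => (F a + P u) * g u) (Ioc a b) := by
    have := mul_cont_integrable hab hg (φ := fun x => F a + P x) (continuousOn_const.add hPc)
    exact this.congr (Filter.Eventually.of_forall fun x => mul_comm _ _)
  have e2 : (∫ u in Ioc a b, (f u * (G a + Q u) + (F a + P u) * g u))
      = (∫ u in Ioc a b, f u * (G a + Q u)) + ∫ u in Ioc a b, (F a + P u) * g u :=
    integral_add i1 i2
  have e3 : (∫ u in Ioc a b, f u * (G a + Q u))
      = G a * P b + ∫ u in Ioc a b, f u * Q u := by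
    have : (∫ u in Ioc a b, f u * (G a + Q u))
        = ∫ u in Ioc a b, (G a * f u + f u * Q u) := by
      refine setIntegral_congr_fun measurableSet_Ioc (fun u _ => ?_); ring
    rw [this, integral_add (hf.const_mul _) hfQ, integral_const_mul]
  have e4 : (∫ u in Ioc a b, (F a + P u) * g u)
      = F a * Q b + ∫ u in Ioc a b, g u * P u := by
    have : (∫ u in Ioc a b, (F a + P u) * g u)
        = ∫ u in Ioc a b, (F a * g u + g u * P u) := by
      refine setIntegral_congr_fun measurableSet_Ioc (fun u _ => ?_); ring
    rw [this, integral_add (hg.const_mul _) hgP, integral_const_mul]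
  have e5 : (∫ v in Ioc a b, f v * (Q b - Q v))
      = Q b * P b - ∫ u in Ioc a b, f u * Q u := by
    have : (∫ v in Ioc a b, f v * (Q b - Q v))
        = ∫ v in Ioc a b, (Q b * f v - f v * Q v) := by
      refine setIntegral_congr_fun measurableSet_Ioc (fun u _ => ?_); ring
    rw [this, integral_sub (hf.const_mul _) hfQ, integral_const_mul]
  have hFb : F b = F a + P b := hF b ⟨hab, le_rfl⟩
  have hGb : G b = G a + Q b := hG b ⟨hab, le_rfl⟩
  rw [e1, e2, e3, e4, key, e5, hFb, hGb]; ring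

end helpers
section exprep
open Filter
variable {a b : ℝ} {f : ℝ → ℝ}

lemma tendsto_exp_partial (y : ℝ) :
    Tendsto (fun N => ∑ n ∈ Finset.range N, y ^ n / (n.factorial : ℝ)) atTop
      (nhds (Real.exp y)) := by
  rw [Real.exp_eq_exp_ℝ, NormedSpace.exp_eq_tsum_div]
  exact (NormedSpace.expSeries_div_summable y).hasSum.tendsto_sum_nat

lemma Qa_zero : (∫ v in Ioc a a, f v) = 0 := by simp

lemma pow_rep (hab : a ≤ b) (hf : IntegrableOn f (Ioc a b)) (n : ℕ) :
    ∀ x ∈ Icc a b, (∫ v in Ioc a x, f v) ^ (n + 1)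
      = ∫ u in Ioc a x, ((n + 1 : ℝ) * (f u * (∫ v in Ioc a u, f v) ^ n)) := by
  induction n with
  | zero =>
    intro x hx
    simp only [pow_zero, mul_one, pow_one, Nat.cast_zero, zero_add, one_mul]
  | succ n ih =>
    intro x hx
    have hax : a ≤ x := hx.1
    have hfx : IntegrableOn f (Ioc a x) := hf.mono_set (Ioc_subset_Ioc_right hx.2)
    set Q : ℝ → ℝ := fun y => ∫ v in Ioc a y, f v with hQdef
    have hQc : ContinuousOn Q (Icc a x) := prim_continuousOn hfx
    have hg : IntegrableOn (fun u => (n + 1 : ℝ) * (f u * Q u ^ n)) (Ioc a x) :=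
      (mul_cont_integrable hax hfx (hQc.pow n)).const_mul _
    have hG : ∀ y ∈ Icc a x, Q y ^ (n + 1) = Q a ^ (n + 1) + ∫ v in Ioc a y, ((n + 1 : ℝ) * (f v * Q v ^ n)) := by
      intro y hy
      have hy' : y ∈ Icc a b := ⟨hy.1, hy.2.trans hx.2⟩
      have := ih y hy'
      rw [hQdef]; simp only [Qa_zero, zero_pow (Nat.succ_ne_zero n), zero_add]
      exact this
    have hF : ∀ y ∈ Icc a x, Q y = Q a + ∫ v in Ioc a y, f v := by
      intro y _; rw [hQdef]; simp [Qa_zero]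
    have hibp := ibp hax hfx hg hF hG
    have hQa : Q a = 0 := Qa_zero
    rw [hQa] at hibp
    simp only [zero_mul, zero_pow (Nat.succ_ne_zero n), mul_zero, zero_add] at hibp
    have : Q x ^ (n + 1 + 1) = Q x * Q x ^ (n + 1) := by ring
    rw [this, hibp]
    refine setIntegral_congr_fun measurableSet_Ioc (fun u _ => ?_)
    push_cast; ring

lemma exp_rep (hab : a ≤ b) (hf : IntegrableOn f (Ioc a b)) :
    ∀ x ∈ Icc a b, Real.exp (∫ v in Ioc a x, f v)
      = 1 + ∫ u in Ioc a x, f u * Real.exp (∫ v in Ioc a u, f v) := by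
  intro x hx
  have hax : a ≤ x := hx.1
  have hfx : IntegrableOn f (Ioc a x) := hf.mono_set (Ioc_subset_Ioc_right hx.2)
  set Q : ℝ → ℝ := fun y => ∫ v in Ioc a y, f v with hQdef
  have hQc : ContinuousOn Q (Icc a x) := prim_continuousOn hfx
  obtain ⟨C, hC⟩ := (isCompact_Icc (a := a) (b := x)).exists_bound_of_continuousOn hQc
  -- the partial-sum representation
  have term : ∀ n : ℕ, Q x ^ (n + 1) / ((n + 1).factorial : ℝ)
      = ∫ u in Ioc a x, f u * (Q u ^ n / (n.factorial : ℝ)) := by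
    intro n
    have h1 := pow_rep hax hfx n x ⟨hax, le_rfl⟩
    have h2 : (∫ u in Ioc a x, ((n + 1 : ℝ) * (f u * Q u ^ n)))
        = (n + 1 : ℝ) * ∫ u in Ioc a x, f u * Q u ^ n := integral_const_mul _ _
    have h3 : (∫ u in Ioc a x, f u * (Q u ^ n / (n.factorial : ℝ)))
        = (1 / (n.factorial : ℝ)) * ∫ u in Ioc a x, f u * Q u ^ n := by
      rw [← integral_const_mul]
      refine setIntegral_congr_fun measurableSet_Ioc (fun u _ => ?_); ring
    rw [h3, ← hQdef] at *
    rw [h1, h2]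
    have hfact : (((n + 1).factorial : ℝ)) = (n + 1 : ℝ) * (n.factorial : ℝ) := by
      rw [Nat.factorial_succ]; push_cast; ring
    rw [hfact]
    have h4 : (n.factorial : ℝ) ≠ 0 := Nat.cast_ne_zero.2 n.factorial_ne_zero
    have h5 : (n + 1 : ℝ) ≠ 0 := by positivity
    field_simp
  have hint : ∀ n : ℕ, IntegrableOn (fun u => f u * (Q u ^ n / (n.factorial : ℝ))) (Ioc a x) := by
    intro n
    exact mul_cont_integrable hax hfx ((hQc.pow n).div_const _)
  have hintS : ∀ N : ℕ, IntegrableOn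
      (fun u => f u * (∑ n ∈ Finset.range N, Q u ^ n / (n.factorial : ℝ))) (Ioc a x) := by
    intro N
    refine (integrable_finset_sum (Finset.range N) (fun n _ => hint n)).congr
      (Filter.Eventually.of_forall fun u => ?_)
    exact (Finset.mul_sum (Finset.range N) (fun n => Q u ^ n / (n.factorial : ℝ)) (f u)).symm
  have hpart : ∀ N : ℕ, (∑ n ∈ Finset.range (N + 1), Q x ^ n / (n.factorial : ℝ))
      = 1 + ∫ u in Ioc a x, f u * (∑ n ∈ Finset.range N, Q u ^ n / (n.factorial : ℝ)) := by
    intro N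
    rw [Finset.sum_range_succ']
    have e1 : (∑ n ∈ Finset.range N, Q x ^ (n + 1) / (((n + 1).factorial : ℕ) : ℝ))
        = ∑ n ∈ Finset.range N, ∫ u in Ioc a x, f u * (Q u ^ n / (n.factorial : ℝ)) :=
      Finset.sum_congr rfl (fun n _ => term n)
    rw [e1, ← integral_finset_sum _ (fun n _ => hint n)]
    have e2 : ∀ u : ℝ, (∑ n ∈ Finset.range N, f u * (Q u ^ n / (n.factorial : ℝ)))
        = f u * (∑ n ∈ Finset.range N, Q u ^ n / (n.factorial : ℝ)) := by
      intro u; rw [Finset.mul_sum]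
    simp only [e2]
    norm_num [add_comm]
  -- limits
  have hL : Tendsto (fun N => ∑ n ∈ Finset.range (N + 1), Q x ^ n / (n.factorial : ℝ)) atTop
      (nhds (Real.exp (Q x))) :=
    (tendsto_exp_partial (Q x)).comp (tendsto_add_atTop_nat 1)
  have hR : Tendsto (fun N => ∫ u in Ioc a x, f u * (∑ n ∈ Finset.range N, Q u ^ n / (n.factorial : ℝ)))
      atTop (nhds (∫ u in Ioc a x, f u * Real.exp (Q u))) := by
    refine tendsto_integral_of_dominated_convergence (fun u => ‖f u‖ * Real.exp C)
      (fun N => (hintS N).aestronglyMeasurable) (hfx.norm.mul_const _) (fun N => ?_) ?_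
    · refine (ae_restrict_iff' measurableSet_Ioc).2 (Filter.Eventually.of_forall fun u hu => ?_)
      have huI : u ∈ Icc a x := Ioc_subset_Icc_self hu
      have hQu : |Q u| ≤ C := by simpa [Real.norm_eq_abs] using hC u huI
      have hsum : |∑ n ∈ Finset.range N, Q u ^ n / (n.factorial : ℝ)| ≤ Real.exp C := by
        calc |∑ n ∈ Finset.range N, Q u ^ n / (n.factorial : ℝ)|
            ≤ ∑ n ∈ Finset.range N, |Q u ^ n / (n.factorial : ℝ)| := Finset.abs_sum_le_sum_abs _ _
          _ ≤ ∑ n ∈ Finset.range N, |Q u| ^ n / (n.factorial : ℝ) := by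
              refine Finset.sum_le_sum (fun n _ => ?_)
              rw [abs_div, abs_pow, abs_of_nonneg (by positivity : (0:ℝ) ≤ (n.factorial : ℝ))]
          _ ≤ Real.exp |Q u| := Real.sum_le_exp_of_nonneg (abs_nonneg _) N
          _ ≤ Real.exp C := Real.exp_le_exp.2 hQu
      simp only [Real.norm_eq_abs, abs_mul]
      exact mul_le_mul_of_nonneg_left hsum (abs_nonneg _)
    · refine Filter.Eventually.of_forall (fun u => ?_)
      exact Tendsto.const_mul _ (tendsto_exp_partial (Q u))
  have := tendsto_nhds_unique (hL.congr' (Filter.Eventually.of_forall fun N => (hpart N)))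
    (hR.const_add 1)
  simpa [hQdef] using this

end exprep
lemma gronwall_core {Y Y' α : ℝ → ℝ}
    (hY'int : ∀ b, IntegrableOn Y' (Set.Icc 0 b))
    (hYAC : ∀ t, 0 ≤ t → Y t = Y 0 + ∫ s in (0:ℝ)..t, Y' s)
    (hαint : ∀ b, IntegrableOn α (Set.Icc 0 b))
    (hineq : ∀ᵐ t ∂(volume : Measure ℝ), 0 ≤ t → Y' t + α t * Y t ≤ 0)
    {a b : ℝ} (ha : 0 ≤ a) (hab : a ≤ b) :
    Y b ≤ Y a * Real.exp (-(∫ s in Ioc a b, α s)) := by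
  have hsub : Ioc a b ⊆ Icc 0 b := fun x hx => ⟨ha.trans hx.1.le, hx.2⟩
  have hα : IntegrableOn α (Ioc a b) := (hαint b).mono_set hsub
  have hY' : IntegrableOn Y' (Ioc a b) := (hY'int b).mono_set hsub
  set Q : ℝ → ℝ := fun y => ∫ v in Ioc a y, α v with hQdef
  set E : ℝ → ℝ := fun y => Real.exp (Q y) with hEdef
  have hQc : ContinuousOn Q (Icc a b) := prim_continuousOn hα
  have hEc : ContinuousOn E (Icc a b) := Real.continuous_exp.comp_continuousOn hQc
  have hg : IntegrableOn (fun u => α u * E u) (Ioc a b) := mul_cont_integrable hab hα hEc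
  have hEa : E a = 1 := by simp [hEdef, hQdef]
  have hGrep : ∀ x ∈ Icc a b, E x = E a + ∫ v in Ioc a x, α v * E v := by
    intro x hx
    rw [hEa, hEdef]
    exact exp_rep hab hα x hx
  have hFrep : ∀ x ∈ Icc a b, Y x = Y a + ∫ v in Ioc a x, Y' v := by
    intro x hx
    have hx0 : 0 ≤ x := ha.trans hx.1
    have hia : IntervalIntegrable Y' volume 0 a := by
      have : IntegrableOn Y' (uIcc 0 a) := by rw [uIcc_of_le ha]; exact hY'int a
      exact this.intervalIntegrable
    have hix : IntervalIntegrable Y' volume 0 x := by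
      have : IntegrableOn Y' (uIcc 0 x) := by rw [uIcc_of_le hx0]; exact hY'int x
      exact this.intervalIntegrable
    have hsub2 := intervalIntegral.integral_interval_sub_left hix hia
    have h1 := hYAC x hx0
    have h2 := hYAC a ha
    rw [← intervalIntegral.integral_of_le hx.1, ← hsub2]
    linarith
  have hibp := ibp hab hY' hg hFrep hGrep
  rw [hEa, mul_one] at hibp
  have hnonpos : (∫ u in Ioc a b, (Y' u * E u + Y u * (α u * E u))) ≤ 0 := by
    refine integral_nonpos_of_ae ?_
    have h1 : ∀ᵐ u ∂volume.restrict (Ioc a b), 0 ≤ u → Y' u + α u * Y u ≤ 0 :=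
      hineq.filter_mono (ae_mono Measure.restrict_le_self)
    have h2 : ∀ᵐ u ∂volume.restrict (Ioc a b), u ∈ Ioc a b := ae_restrict_mem measurableSet_Ioc
    filter_upwards [h1, h2] with u hu hmem
    have hu0 : 0 ≤ u := ha.trans hmem.1.le
    have h3 : Y' u + α u * Y u ≤ 0 := hu hu0
    have h4 : Y' u * E u + Y u * (α u * E u) = (Y' u + α u * Y u) * E u := by ring
    rw [h4]
    exact mul_nonpos_iff.2 (Or.inr ⟨h3, (Real.exp_pos _).le⟩)
  have h5 : Y b * E b ≤ Y a := by linarith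
  have h6 : Y b = (Y b * E b) * Real.exp (-(Q b)) := by
    rw [hEdef, mul_assoc, ← Real.exp_add, add_neg_cancel, Real.exp_zero, mul_one]
  rw [h6]
  exact mul_le_mul_of_nonneg_right h5 (Real.exp_pos _).le

end ExpDecayAux

open ExpDecayAux Set

/-- **Exponential decay from averaged coercivity.** Let `Y : [0,∞) → [0,∞)` be absolutely
continuous on compact intervals (encoded via the fundamental theorem of calculus:
`Y t = Y 0 + ∫₀ᵗ Y'` with `Y'` locally integrable) and let `α` be locally integrable on
`[0,∞)` with `Y'(t) + α(t) Y(t) ≤ 0` for a.e. `t ≥ 0`. Suppose there exist `T > 0`,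
`β > 0`, `M ≥ 0` and `t* ≥ 0` such that for every `t ≥ t*`:
`∫_t^{t+T} α ≥ β` and `∫_t^{t+T} max(−α, 0) ≤ M`. Then for all `t ≥ t*`,
`Y(t) ≤ Y(t*) e^{β+M} e^{−(β/T)(t−t*)}`. -/
theorem exp_decay_from_averaged_coercivity (Y Y' α : ℝ → ℝ)
    (hY_nn : ∀ t, 0 ≤ t → 0 ≤ Y t)
    (hY'int : ∀ b, IntegrableOn Y' (Set.Icc 0 b))
    (hYAC : ∀ t, 0 ≤ t → Y t = Y 0 + ∫ s in (0 : ℝ)..t, Y' s)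
    (hαint : ∀ b, IntegrableOn α (Set.Icc 0 b))
    (hineq : ∀ᵐ t ∂(volume : Measure ℝ), 0 ≤ t → Y' t + α t * Y t ≤ 0)
    (T β M tstar : ℝ) (hT : 0 < T) (hβ : 0 < β) (hM : 0 ≤ M) (htstar : 0 ≤ tstar)
    (hcoer : ∀ t, tstar ≤ t → β ≤ ∫ s in t..(t + T), α s)
    (hneg : ∀ t, tstar ≤ t → (∫ s in t..(t + T), max (-α s) 0) ≤ M) :
    ∀ t, tstar ≤ t →
      Y t ≤ Y tstar * Real.exp (β + M) * Real.exp (-(β / T) * (t - tstar)) := by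
  have core : ∀ a b : ℝ, 0 ≤ a → a ≤ b →
      Y b ≤ Y a * Real.exp (-(∫ s in Ioc a b, α s)) :=
    fun a b ha hab => gronwall_core hY'int hYAC hαint hineq ha hab
  -- one-window decay step
  have hstep : ∀ u, tstar ≤ u → Y (u + T) ≤ Y u * Real.exp (-β) := by
    intro u hu
    have h0u : 0 ≤ u := htstar.trans hu
    have hco := hcoer u hu
    rw [intervalIntegral.integral_of_le (by linarith : u ≤ u + T)] at hco
    calc Y (u + T) ≤ Y u * Real.exp (-(∫ s in Ioc u (u + T), α s)) :=
          core u (u + T) h0u (by linarith)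
      _ ≤ Y u * Real.exp (-β) :=
          mul_le_mul_of_nonneg_left (Real.exp_le_exp.2 (by linarith)) (hY_nn u h0u)
  have hwin : ∀ n : ℕ, Y (tstar + n * T) ≤ Y tstar * Real.exp (-(n * β)) := by
    intro n
    induction n with
    | zero => simp
    | succ n ih =>
      have h1 : tstar ≤ tstar + n * T := le_add_of_nonneg_right (mul_nonneg (Nat.cast_nonneg _) hT.le)
      calc Y (tstar + (n + 1 : ℕ) * T) = Y ((tstar + n * T) + T) := by push_cast; ring_nf
        _ ≤ Y (tstar + n * T) * Real.exp (-β) := hstep _ h1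
        _ ≤ (Y tstar * Real.exp (-(n * β))) * Real.exp (-β) :=
            mul_le_mul_of_nonneg_right ih (Real.exp_pos _).le
        _ = Y tstar * Real.exp (-((n + 1 : ℕ) * β)) := by
            rw [mul_assoc, ← Real.exp_add]; push_cast; ring_nf
  intro t ht
  set n : ℕ := ⌊(t - tstar) / T⌋₊ with hn
  set A : ℝ := tstar + n * T with hA
  have hts : 0 ≤ (t - tstar) / T := div_nonneg (by linarith) hT.le
  have hn1 : (n : ℝ) * T ≤ t - tstar := by
    rw [← le_div_iff₀ hT]; exact Nat.floor_le hts
  have hn2 : t - tstar < ((n : ℝ) + 1) * T := by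
    rw [← div_lt_iff₀ hT]; exact Nat.lt_floor_add_one _
  have htsA : tstar ≤ A := le_add_of_nonneg_right (mul_nonneg (Nat.cast_nonneg _) hT.le)
  have hA0 : 0 ≤ A := htstar.trans htsA
  have hAt : A ≤ t := by rw [hA]; linarith
  have htAT : t ≤ A + T := by rw [hA]; linarith
  -- bound the leftover integral from below by -M
  have hbound : -M ≤ ∫ s in Ioc A t, α s := by
    set p : ℝ → ℝ := fun s => max (-α s) 0 with hp
    have hαAT : IntegrableOn α (Ioc A (A + T)) :=
      (hαint (A + T)).mono_set (fun x hx => ⟨hA0.trans hx.1.le, hx.2⟩)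
    have hpAT : IntegrableOn p (Ioc A (A + T)) := hαAT.neg.pos_part
    have hpAt : IntegrableOn p (Ioc A t) := hpAT.mono_set (Ioc_subset_Ioc_right htAT)
    have hαAt : IntegrableOn α (Ioc A t) := hαAT.mono_set (Ioc_subset_Ioc_right htAT)
    have e1 : (∫ s in Ioc A t, -(p s)) ≤ ∫ s in Ioc A t, α s := by
      refine integral_mono hpAt.neg hαAt (fun s => ?_)
      simp only [hp]
      rw [neg_le]
      exact le_max_left _ _
    have e2 : (∫ s in Ioc A t, p s) ≤ ∫ s in Ioc A (A + T), p s := by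
      refine setIntegral_mono_set hpAT (Filter.Eventually.of_forall fun s => le_max_right _ _)
        (HasSubset.Subset.eventuallyLE (Ioc_subset_Ioc_right htAT))
    have e3 : (∫ s in Ioc A (A + T), p s) ≤ M := by
      have := hneg A htsA
      rwa [intervalIntegral.integral_of_le (by linarith : A ≤ A + T)] at this
    rw [integral_neg] at e1
    linarith
  have h7 : Y t ≤ Y A * Real.exp M := by
    calc Y t ≤ Y A * Real.exp (-(∫ s in Ioc A t, α s)) := core A t hA0 hAt
      _ ≤ Y A * Real.exp M :=
          mul_le_mul_of_nonneg_left (Real.exp_le_exp.2 (by linarith)) (hY_nn A hA0)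
  have h8 : Y A * Real.exp M ≤ (Y tstar * Real.exp (-(n * β))) * Real.exp M :=
    mul_le_mul_of_nonneg_right (hwin n) (Real.exp_pos _).le
  have h9 : (Y tstar * Real.exp (-(n * β))) * Real.exp M
      ≤ Y tstar * Real.exp (β + M) * Real.exp (-(β / T) * (t - tstar)) := by
    rw [mul_assoc, mul_assoc, ← Real.exp_add, ← Real.exp_add]
    refine mul_le_mul_of_nonneg_left (Real.exp_le_exp.2 ?_) (hY_nn tstar htstar)
    have h4 : β / T * (t - tstar) ≤ β / T * (((n : ℝ) + 1) * T) :=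
      mul_le_mul_of_nonneg_left hn2.le (by positivity)
    have h5 : β / T * (((n : ℝ) + 1) * T) = ((n : ℝ) + 1) * β := by
      field_simp
    linarith
  linarith
end
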